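/- Let N ≥ 2, d ≥ 2, k ≥ 2 be integers, let ψ : (Fin N → Fin d) → ℂ be a unit vector that is genuinely multipartite entangled (GME), and let 𝓕 be a finite family of subsets of Fin N, each of cardinality at most k. If ψ is 𝓕-UDP, then (k − 1) · |𝓕| ≥ N − 1; equivalently, at least ⌈(N − 1)/(k − 1)⌉ marginals of body size at most k are required to uniquely determine a GME pure state among pure states. -/

import Mathlib

open Finset

/-- Combine `x` defined on `S` with `z` defined on the complement of `S`
into a full assignment `Fin N → Fin d`. -/
def joinFun {N d : ℕ} (S : Finset (Fin N))
    (x : {i // i ∈ S} → Fin d) (z : {i // i ∉ S} → Fin d) : Fin N → Fin d :=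
  fun i => if h : i ∈ S then x ⟨i, h⟩ else z ⟨i, h⟩

/-- The marginal (reduced density matrix) of the pure state `ψ` on the parties `S`. -/
noncomputable def marginal {N d : ℕ} (S : Finset (Fin N)) (ψ : (Fin N → Fin d) → ℂ)
    (x y : {i // i ∈ S} → Fin d) : ℂ :=
  ∑ z : {i // i ∉ S} → Fin d,
    ψ (joinFun S x z) * (starRingEnd ℂ) (ψ (joinFun S y z))

/-- `ψ` is a unit vector. -/
def UnitVec {N d : ℕ} (ψ : (Fin N → Fin d) → ℂ) : Prop :=
  ∑ x, ‖ψ x‖ ^ 2 = 1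

/-- `ψ` is genuinely multipartite entangled. -/
def GME {N d : ℕ} (ψ : (Fin N → Fin d) → ℂ) : Prop :=
  ∀ J : Finset (Fin N), J.Nonempty → J ≠ Finset.univ →
    ¬ ∃ (α : ({i // i ∈ J} → Fin d) → ℂ) (β : ({i // i ∉ J} → Fin d) → ℂ),
      ∀ x z, ψ (joinFun J x z) = α x * β z

/-- `ψ` is uniquely determined by the family of marginals `𝓕` among pure states. -/
def UDP {N d : ℕ} (𝓕 : Finset (Finset (Fin N))) (ψ : (Fin N → Fin d) → ℂ) : Prop :=
  ∀ φ : (Fin N → Fin d) → ℂ, UnitVec φ →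
    (∀ F ∈ 𝓕, marginal F φ = marginal F ψ) →
    ∃ c : ℂ, ‖c‖ = 1 ∧ φ = c • ψ

/-! ### Auxiliary material -/

open Matrix

namespace GmeUdpAux

variable {N d : ℕ}

/-- The matrix of a state with respect to the bipartition `J | Jᶜ`. -/
def stM (J : Finset (Fin N)) (ψ : (Fin N → Fin d) → ℂ) :
    Matrix ({i // i ∈ J} → Fin d) ({i // i ∉ J} → Fin d) ℂ :=
  fun a b => ψ (joinFun J a b)

lemma restr_join (J : Finset (Fin N)) (a : {i // i ∈ J} → Fin d)
    (b : {i // i ∉ J} → Fin d) :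
    (fun i : {i // i ∈ J} => joinFun J a b i.1) = a := by
  funext i
  exact dif_pos i.2

lemma restrC_join (J : Finset (Fin N)) (a : {i // i ∈ J} → Fin d)
    (b : {i // i ∉ J} → Fin d) :
    (fun i : {i // i ∉ J} => joinFun J a b i.1) = b := by
  funext i
  exact dif_neg i.2

/-- Splitting a global assignment along `J`. -/
def splitEquiv (J : Finset (Fin N)) :
    (Fin N → Fin d) ≃ ({i // i ∈ J} → Fin d) × ({i // i ∉ J} → Fin d) where
  toFun w := (fun i => w i.1, fun i => w i.1)
  invFun p := joinFun J p.1 p.2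
  left_inv w := by
    funext i
    simp only [joinFun]
    split <;> rfl
  right_inv p := by
    refine Prod.ext ?_ ?_
    · exact restr_join J p.1 p.2
    · exact restrC_join J p.1 p.2

lemma sum_split {M : Type*} [AddCommMonoid M] (J : Finset (Fin N))
    (f : (Fin N → Fin d) → M) :
    ∑ w, f w = ∑ a : {i // i ∈ J} → Fin d, ∑ b : {i // i ∉ J} → Fin d,
      f (joinFun J a b) := by
  rw [← Equiv.sum_comp (splitEquiv J).symm f, Fintype.sum_prod_type]
  rfl

lemma trace_stM (J : Finset (Fin N)) (φ : (Fin N → Fin d) → ℂ) (h : UnitVec φ) :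
    Matrix.trace (stM J φ * (stM J φ)ᴴ) = 1 := by
  have e1 : Matrix.trace (stM J φ * (stM J φ)ᴴ)
      = ∑ a, ∑ b, ((Complex.normSq (φ (joinFun J a b)) : ℂ)) := by
    simp only [Matrix.trace, Matrix.diag_apply, Matrix.mul_apply,
      Matrix.conjTranspose_apply, stM, Complex.star_def, Complex.mul_conj]
  rw [e1]
  have h2 : ∑ a : {i // i ∈ J} → Fin d, ∑ b : {i // i ∉ J} → Fin d,
      Complex.normSq (φ (joinFun J a b)) = 1 := by
    rw [← sum_split J (fun w => Complex.normSq (φ w))]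
    rw [← h]
    congr 1
    funext w
    rw [Complex.sq_norm]
  exact_mod_cast congrArg (Complex.ofReal) h2

section SubsetReduction

variable (J F : Finset (Fin N))

/-- Mixing: combine `x` on `F` and `t` on `J \ F` into an assignment on `J`. -/
def mixA (hFJ : F ⊆ J) (x : {i // i ∈ F} → Fin d)
    (t : {i : Fin N // i ∈ J ∧ i ∉ F} → Fin d) : {i // i ∈ J} → Fin d :=
  fun i => if h : i.1 ∈ F then x ⟨i.1, h⟩ else t ⟨i.1, ⟨i.2, h⟩⟩

/-- Splitting the complement of `F` when `F ⊆ J`. -/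
def zsplitA (hFJ : F ⊆ J) :
    ({i : Fin N // i ∉ F} → Fin d) ≃
      ({i : Fin N // i ∈ J ∧ i ∉ F} → Fin d) × ({i // i ∉ J} → Fin d) where
  toFun z := (fun i => z ⟨i.1, i.2.2⟩, fun i => z ⟨i.1, fun hF => i.2 (hFJ hF)⟩)
  invFun p := fun i => if h : i.1 ∈ J then p.1 ⟨i.1, ⟨h, i.2⟩⟩ else p.2 ⟨i.1, h⟩
  left_inv z := by
    funext i
    dsimp only
    split <;> rfl
  right_inv p := by
    refine Prod.ext ?_ ?_
    · funext i
      exact dif_pos i.2.1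
    · funext i
      exact dif_neg i.2

lemma join_zsplitA (hFJ : F ⊆ J) (x : {i // i ∈ F} → Fin d)
    (t : {i : Fin N // i ∈ J ∧ i ∉ F} → Fin d) (b : {i // i ∉ J} → Fin d) :
    joinFun F x ((zsplitA J F hFJ).symm (t, b)) = joinFun J (mixA J F hFJ x t) b := by
  funext i
  unfold joinFun zsplitA mixA
  dsimp only [Equiv.coe_fn_symm_mk]
  by_cases hF : i ∈ F
  · rw [dif_pos hF, dif_pos (hFJ hF), dif_pos hF]
  · rw [dif_neg hF]
    by_cases hJ : i ∈ J
    · rw [dif_pos hJ, dif_pos hJ, dif_neg hF]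
    · rw [dif_neg hJ, dif_neg hJ]

lemma marginal_apply_subset (hFJ : F ⊆ J) (φ : (Fin N → Fin d) → ℂ)
    (x y : {i // i ∈ F} → Fin d) :
    marginal F φ x y = ∑ t : {i : Fin N // i ∈ J ∧ i ∉ F} → Fin d,
      (stM J φ * (stM J φ)ᴴ) (mixA J F hFJ x t) (mixA J F hFJ y t) := by
  unfold marginal
  rw [← Equiv.sum_comp (zsplitA J F hFJ).symm
    (fun z => φ (joinFun F x z) * (starRingEnd ℂ) (φ (joinFun F y z))),
    Fintype.sum_prod_type]
  refine Finset.sum_congr rfl fun t _ => ?_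
  rw [Matrix.mul_apply]
  refine Finset.sum_congr rfl fun b _ => ?_
  rw [join_zsplitA J F hFJ x t b, join_zsplitA J F hFJ y t b]
  rfl

lemma marginal_eq_of_subset (hFJ : F ⊆ J) (φ ψ : (Fin N → Fin d) → ℂ)
    (h : stM J φ * (stM J φ)ᴴ = stM J ψ * (stM J ψ)ᴴ) :
    marginal F φ = marginal F ψ := by
  funext x y
  rw [marginal_apply_subset J F hFJ φ x y, marginal_apply_subset J F hFJ ψ x y, h]

/-- Mixing on the complement side. -/
def mixB (x : {i // i ∈ F} → Fin d)
    (s : {i : Fin N // i ∉ J ∧ i ∉ F} → Fin d) (hFJ : ∀ i ∈ F, i ∉ J) :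
    {i // i ∉ J} → Fin d :=
  fun i => if h : i.1 ∈ F then x ⟨i.1, h⟩ else s ⟨i.1, ⟨i.2, h⟩⟩

/-- Splitting the complement of `F` when `F` is disjoint from `J`. -/
def zsplitB (hFJ : ∀ i ∈ F, i ∉ J) :
    ({i : Fin N // i ∉ F} → Fin d) ≃
      ({i // i ∈ J} → Fin d) × ({i : Fin N // i ∉ J ∧ i ∉ F} → Fin d) where
  toFun z := (fun i => z ⟨i.1, fun hF => hFJ i.1 hF i.2⟩, fun i => z ⟨i.1, i.2.2⟩)
  invFun p := fun i => if h : i.1 ∈ J then p.1 ⟨i.1, h⟩ else p.2 ⟨i.1, ⟨h, i.2⟩⟩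
  left_inv z := by
    funext i
    dsimp only
    split <;> rfl
  right_inv p := by
    refine Prod.ext ?_ ?_
    · funext i
      exact dif_pos i.2
    · funext i
      exact dif_neg i.2.1

lemma join_zsplitB (hFJ : ∀ i ∈ F, i ∉ J) (x : {i // i ∈ F} → Fin d)
    (t : {i // i ∈ J} → Fin d) (s : {i : Fin N // i ∉ J ∧ i ∉ F} → Fin d) :
    joinFun F x ((zsplitB J F hFJ).symm (t, s)) = joinFun J t (mixB J F x s hFJ) := by
  funext i
  unfold joinFun zsplitB mixB
  dsimp only [Equiv.coe_fn_symm_mk]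
  by_cases hF : i ∈ F
  · rw [dif_pos hF, dif_neg (hFJ i hF), dif_pos hF]
  · rw [dif_neg hF]
    by_cases hJ : i ∈ J
    · rw [dif_pos hJ, dif_pos hJ]
    · rw [dif_neg hJ, dif_neg hJ, dif_neg hF]

lemma marginal_apply_disjoint (hFJ : ∀ i ∈ F, i ∉ J) (φ : (Fin N → Fin d) → ℂ)
    (x y : {i // i ∈ F} → Fin d) :
    marginal F φ x y = ∑ s : {i : Fin N // i ∉ J ∧ i ∉ F} → Fin d,
      ((stM J φ)ᴴ * stM J φ) (mixB J F y s hFJ) (mixB J F x s hFJ) := by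
  unfold marginal
  rw [← Equiv.sum_comp (zsplitB J F hFJ).symm
    (fun z => φ (joinFun F x z) * (starRingEnd ℂ) (φ (joinFun F y z))),
    Fintype.sum_prod_type, Finset.sum_comm]
  refine Finset.sum_congr rfl fun s _ => ?_
  rw [Matrix.mul_apply]
  refine Finset.sum_congr rfl fun t _ => ?_
  rw [join_zsplitB J F hFJ x t s, join_zsplitB J F hFJ y t s,
    Matrix.conjTranspose_apply]
  exact mul_comm _ _

lemma marginal_eq_of_disjoint (hFJ : ∀ i ∈ F, i ∉ J) (φ ψ : (Fin N → Fin d) → ℂ)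
    (h : (stM J φ)ᴴ * stM J φ = (stM J ψ)ᴴ * stM J ψ) :
    marginal F φ = marginal F ψ := by
  funext x y
  rw [marginal_apply_disjoint J F hFJ φ x y, marginal_apply_disjoint J F hFJ ψ x y, h]

end SubsetReduction

/-- Combinatorial growth lemma: one can saturate a set under a family. -/
lemma grow (n : ℕ) : ∀ (𝓕 : Finset (Finset (Fin N))), 𝓕.card = n →
    ∀ J : Finset (Fin N), ∃ J' : Finset (Fin N), J ⊆ J' ∧
      (∀ F ∈ 𝓕, F ⊆ J' ∨ ∀ i ∈ F, i ∉ J') ∧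
      J'.card ≤ J.card + ∑ F ∈ 𝓕, (F.card - 1) := by
  induction n using Nat.strong_induction_on with
  | _ n ih =>
    intro 𝓕 hn J
    by_cases hall : ∀ F ∈ 𝓕, F ⊆ J ∨ ∀ i ∈ F, i ∉ J
    · exact ⟨J, subset_rfl, hall, Nat.le_add_right _ _⟩
    · push_neg at hall
      obtain ⟨F, hF𝓕, hFn, i, hiF, hiJ⟩ := hall
      have hn0 : n ≠ 0 := by
        rintro rfl
        rw [Finset.card_eq_zero] at hn
        subst hn
        exact absurd hF𝓕 (Finset.notMem_empty F)
      have hcard : (𝓕.erase F).card = n - 1 := by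
        rw [Finset.card_erase_of_mem hF𝓕, hn]
      obtain ⟨J', hJJ', hsplit, hcard'⟩ :=
        ih (n - 1) (by omega) (𝓕.erase F) hcard (J ∪ F)
      refine ⟨J', (Finset.subset_union_left).trans hJJ', ?_, ?_⟩
      · intro G hG
        by_cases hGF : G = F
        · subst hGF
          exact Or.inl ((Finset.subset_union_right).trans hJJ')
        · exact hsplit G (Finset.mem_erase.mpr ⟨hGF, hG⟩)
      · have h1 : (J ∪ F).card + (J ∩ F).card = J.card + F.card :=
          Finset.card_union_add_card_inter J F
        have h2 : 1 ≤ (J ∩ F).card := by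
          rw [Nat.succ_le_iff, Finset.card_pos]
          exact ⟨i, Finset.mem_inter.mpr ⟨hiJ, hiF⟩⟩
        have h3 : 1 ≤ F.card := by
          rw [Nat.succ_le_iff, Finset.card_pos]
          exact ⟨i, hiF⟩
        have h4 : ∑ G ∈ 𝓕.erase F, (G.card - 1) + (F.card - 1) = ∑ G ∈ 𝓕, (G.card - 1) :=
          Finset.sum_erase_add 𝓕 _ hF𝓕
        omega

end GmeUdpAux

open GmeUdpAux in
/-- If a GME pure state `ψ` is `𝓕`-UDP, where every set in `𝓕`
has cardinality at most `k`, then `(k - 1) * |𝓕| ≥ N - 1`; equivalently, at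
least `⌈(N - 1)/(k - 1)⌉` marginals of body size at most `k` are needed. -/
theorem gme_UDP_card_lower_bound (N d k : ℕ) (hN : 2 ≤ N) (hd : 2 ≤ d) (hk : 2 ≤ k)
    (ψ : (Fin N → Fin d) → ℂ) (hψ : UnitVec ψ) (hGME : GME ψ)
    (𝓕 : Finset (Finset (Fin N))) (hsize : ∀ F ∈ 𝓕, F.card ≤ k)
    (hUDP : UDP 𝓕 ψ) :
    (k - 1) * 𝓕.card ≥ N - 1 := by
  by_contra hcon
  push_neg at hcon
  -- find a nontrivial part `J` compatible with the family
  obtain ⟨J, hJsub, hsplit, hJcard⟩ :=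
    grow 𝓕.card 𝓕 rfl ({(⟨0, by omega⟩ : Fin N)} : Finset (Fin N))
  have hJne : J.Nonempty := ⟨_, hJsub (Finset.mem_singleton_self _)⟩
  have hsum : ∑ F ∈ 𝓕, (F.card - 1) ≤ 𝓕.card * (k - 1) := by
    apply Finset.sum_le_card_nsmul
    intro F hF
    exact Nat.sub_le_sub_right (hsize F hF) 1
  rw [Nat.mul_comm] at hsum
  have hJlt : J.card < N := by
    have := Finset.card_singleton (⟨0, by omega⟩ : Fin N)
    omega
  have hJuniv : J ≠ Finset.univ := by
    intro h
    rw [h, Finset.card_univ, Fintype.card_fin] at hJlt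
    omega
  -- set up the matrix machinery
  set M : Matrix ({i // i ∈ J} → Fin d) ({i // i ∉ J} → Fin d) ℂ := stM J ψ with hM
  set ρ : Matrix ({i // i ∈ J} → Fin d) ({i // i ∈ J} → Fin d) ℂ := M * Mᴴ with hρdef
  have hherm : ρ.IsHermitian := Matrix.isHermitian_mul_conjTranspose_self M
  have htr : ρ.trace = 1 := trace_stM J ψ hψ
  have hρ0 : ρ ≠ 0 := by
    intro h
    rw [h, Matrix.trace_zero] at htr
    exact one_ne_zero htr.symm
  obtain ⟨v, t, ht0, hv0, hvt⟩ := hherm.exists_eigenvector_of_ne_zero hρ0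
  -- normalization of v
  set sR : ℝ := ∑ i, Complex.normSq (v i) with hsR
  have hsRpos : 0 < sR := by
    obtain ⟨i, hi⟩ := Function.ne_iff.mp hv0
    apply Finset.sum_pos'
    · intro j _
      exact Complex.normSq_nonneg (v j)
    · exact ⟨i, Finset.mem_univ i, Complex.normSq_pos.mpr hi⟩
  have hsR0 : (sR : ℂ) ≠ 0 := by
    exact_mod_cast ne_of_gt hsRpos
  have hvv : ∑ l, star (v l) * v l = (sR : ℂ) := by
    rw [hsR]
    push_cast
    refine Finset.sum_congr rfl fun l _ => ?_
    rw [Complex.star_def, mul_comm, Complex.mul_conj]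
  -- the unitary
  set P : Matrix ({i // i ∈ J} → Fin d) ({i // i ∈ J} → Fin d) ℂ :=
    Matrix.vecMulVec v (star v) with hP
  have hPP : P * P = (sR : ℂ) • P := by
    funext i j
    simp only [Matrix.mul_apply, Matrix.vecMulVec_apply, Matrix.smul_apply, hP,
      Pi.star_apply, smul_eq_mul]
    calc ∑ l, v i * star (v l) * (v l * star (v j))
        = (∑ l, star (v l) * v l) * (v i * star (v j)) := by
          rw [Finset.sum_mul]
          exact Finset.sum_congr rfl fun l _ => by ring
      _ = (sR : ℂ) * (v i * star (v j)) := by rw [hvv]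
  have hPH : Pᴴ = P := by
    funext i j
    simp only [Matrix.conjTranspose_apply, Matrix.vecMulVec_apply, hP, Pi.star_apply,
      StarMul.star_mul, star_star]
  have hρP : ρ * P = (t : ℂ) • P := by
    funext i j
    simp only [Matrix.mul_apply, Matrix.vecMulVec_apply, Matrix.smul_apply, hP,
      Pi.star_apply, smul_eq_mul]
    calc ∑ l, ρ i l * (v l * star (v j))
        = (∑ l, ρ i l * v l) * star (v j) := by
          rw [Finset.sum_mul]
          exact Finset.sum_congr rfl fun l _ => by ring
      _ = (ρ *ᵥ v) i * star (v j) := rfl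
      _ = (t : ℂ) * (v i * star (v j)) := by
          rw [hvt]
          simp only [Pi.smul_apply, Complex.real_smul]
          ring
  have hPρ : P * ρ = (t : ℂ) • P := by
    funext i j
    simp only [Matrix.mul_apply, Matrix.vecMulVec_apply, Matrix.smul_apply, hP,
      Pi.star_apply, smul_eq_mul]
    have hρv : ∑ l, star (v l) * ρ l j = (t : ℂ) * star (v j) := by
      have : ∑ l, star (v l) * ρ l j = star (∑ l, ρ j l * v l) := by
        rw [star_sum]
        refine Finset.sum_congr rfl fun l _ => ?_
        rw [StarMul.star_mul]
        congr 1
        have := congrFun (congrFun hherm.eq j) l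
        simp only [Matrix.conjTranspose_apply] at this
        rw [← this, star_star]
      rw [this, show ∑ l, ρ j l * v l = (ρ *ᵥ v) j from rfl, hvt]
      simp only [Pi.smul_apply, Complex.real_smul, StarMul.star_mul, Complex.star_def,
        Complex.conj_ofReal]
      ring
    calc ∑ l, v i * star (v l) * ρ l j
        = v i * ∑ l, star (v l) * ρ l j := by
          rw [Finset.mul_sum]
          exact Finset.sum_congr rfl fun l _ => by ring
      _ = (t : ℂ) * (v i * star (v j)) := by rw [hρv]; ring
  set U : Matrix ({i // i ∈ J} → Fin d) ({i // i ∈ J} → Fin d) ℂ :=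
    1 - (2 * (sR : ℂ)⁻¹) • P with hU
  have hUH : Uᴴ = U := by
    rw [hU, Matrix.conjTranspose_sub, Matrix.conjTranspose_one, Matrix.conjTranspose_smul,
      hPH]
    congr 1
    simp [Complex.star_def, _root_.map_mul, map_inv₀, Complex.conj_ofReal]
  have hUU : U * U = 1 := by
    rw [hU]
    have key : ((2 : ℂ) * (sR : ℂ)⁻¹) • P * (((2 : ℂ) * (sR : ℂ)⁻¹) • P)
        = ((2 * (sR : ℂ)⁻¹) + (2 * (sR : ℂ)⁻¹)) • P := by
      rw [Matrix.smul_mul, Matrix.mul_smul, hPP, smul_smul, smul_smul]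
      congr 1
      field_simp
      ring
    rw [Matrix.sub_mul, Matrix.mul_sub, Matrix.mul_sub, key, add_smul]
    simp only [one_mul, mul_one]
    abel
  have hcommP : ρ * U = U * ρ := by
    rw [hU, Matrix.mul_sub, Matrix.sub_mul, mul_one, one_mul, Matrix.mul_smul,
      Matrix.smul_mul, hρP, hPρ]
  -- the perturbed state
  set φ : (Fin N → Fin d) → ℂ :=
    fun w => (U * M) (fun i => w i.1) (fun i => w i.1) with hφ
  have hstMφ : stM J φ = U * M := by
    funext a b
    show (U * M) (fun i : {i // i ∈ J} => joinFun J a b i.1)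
        (fun i : {i // i ∉ J} => joinFun J a b i.1) = (U * M) a b
    rw [restr_join, restrC_join]
  have hUρU : (U * M) * (U * M)ᴴ = ρ := by
    rw [Matrix.conjTranspose_mul, hUH, ← Matrix.mul_assoc, Matrix.mul_assoc (U * M)]
    calc U * M * (Mᴴ * U) = U * (M * Mᴴ) * U := by simp only [Matrix.mul_assoc]
      _ = U * ρ * U := by rw [hρdef]
      _ = ρ * U * U := by rw [← hcommP]
      _ = ρ * (U * U) := by rw [Matrix.mul_assoc]
      _ = ρ := by rw [hUU, mul_one]
  have hσφ : (U * M)ᴴ * (U * M) = Mᴴ * M := by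
    rw [Matrix.conjTranspose_mul, hUH, Matrix.mul_assoc, ← Matrix.mul_assoc U U M,
      hUU, Matrix.one_mul]
  have hUnitφ : UnitVec φ := by
    have htr' : Matrix.trace (stM J φ * (stM J φ)ᴴ) = 1 := by
      rw [hstMφ, hUρU, htr]
    -- reverse direction of trace_stM
    have key : Matrix.trace (stM J φ * (stM J φ)ᴴ)
        = ((∑ w, ‖φ w‖ ^ 2 : ℝ) : ℂ) := by
      have e1 : Matrix.trace (stM J φ * (stM J φ)ᴴ)
          = ∑ a, ∑ b, ((Complex.normSq (stM J φ a b) : ℂ)) := by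
        simp only [Matrix.trace, Matrix.diag_apply, Matrix.mul_apply,
          Matrix.conjTranspose_apply, Complex.star_def, Complex.mul_conj]
      rw [e1]
      have e2 : ∑ w, ‖φ w‖ ^ 2
          = ∑ a : {i // i ∈ J} → Fin d, ∑ b : {i // i ∉ J} → Fin d,
            Complex.normSq (stM J φ a b) := by
        rw [sum_split J (fun w => ‖φ w‖ ^ 2)]
        refine Finset.sum_congr rfl fun a _ => Finset.sum_congr rfl fun b _ => ?_
        rw [Complex.sq_norm]
        rfl
      rw [e2]
      push_cast
      rfl
    rw [key] at htr'
    exact_mod_cast htr'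
  have hmarg : ∀ F ∈ 𝓕, marginal F φ = marginal F ψ := by
    intro F hF
    rcases hsplit F hF with hFJ | hFJ
    · exact marginal_eq_of_subset J F hFJ φ ψ (by rw [hstMφ, hUρU])
    · exact marginal_eq_of_disjoint J F hFJ φ ψ (by rw [hstMφ, hσφ])
  obtain ⟨c, hc1, hφc⟩ := hUDP φ hUnitφ hmarg
  -- translate to matrix equation
  have hUM : U * M = c • M := by
    funext a b
    have := congrFun hφc (joinFun J a b)
    rw [hφ] at this
    simp only [Pi.smul_apply, smul_eq_mul] at this
    calc (U * M) a b
        = (U * M) (fun i : {i // i ∈ J} => joinFun J a b i.1)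
          (fun i : {i // i ∉ J} => joinFun J a b i.1) := by rw [restr_join, restrC_join]
      _ = c * ψ (joinFun J a b) := this
      _ = (c • M) a b := rfl
  -- extract entrywise identity
  set u : ({i // i ∉ J} → Fin d) → ℂ := fun b => ∑ l, star (v l) * M l b with hu
  have hentry : ∀ a b, M a b - 2 * (sR : ℂ)⁻¹ * (v a * u b) = c * M a b := by
    intro a b
    have := congrFun (congrFun hUM a) b
    rw [hU] at this
    simp only [Matrix.sub_mul, Matrix.smul_mul, Matrix.one_mul, Matrix.sub_apply,
      Matrix.smul_apply, Matrix.smul_apply, smul_eq_mul] at this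
    calc M a b - 2 * (sR : ℂ)⁻¹ * (v a * u b)
        = M a b - 2 * (sR : ℂ)⁻¹ * (P * M) a b := by
          congr 2
          rw [hP]
          rw [Matrix.mul_apply, hu, Finset.mul_sum]
          refine Finset.sum_congr rfl fun l _ => ?_
          rw [Matrix.vecMulVec_apply]
          simp only [Pi.star_apply]
          ring
      _ = c * M a b := by
          rw [← this]
  have hu0 : u ≠ 0 := by
    intro h
    have hMv : Mᴴ *ᵥ v = 0 := by
      funext b
      have : u b = 0 := by rw [h]; rfl
      simp only [hu] at this
      simp only [Matrix.mulVec, dotProduct, Matrix.conjTranspose_apply]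
      calc ∑ l, star (M l b) * v l = star (∑ l, star (v l) * M l b) := by
            rw [star_sum]
            exact Finset.sum_congr rfl fun l _ => by rw [StarMul.star_mul, star_star]
        _ = 0 := by rw [this]; exact star_zero _
    have : ρ *ᵥ v = 0 := by
      rw [hρdef, ← Matrix.mulVec_mulVec, hMv, Matrix.mulVec_zero]
    rw [hvt] at this
    have : v = 0 := by
      have ht0' : (t : ℂ) ≠ 0 := by exact_mod_cast ht0
      funext i
      have := congrFun this i
      simp only [Pi.smul_apply, Pi.zero_apply, Complex.real_smul] at this ⊢
      exact (mul_eq_zero.mp this).resolve_left ht0'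
    exact hv0 this
  by_cases hc : c = 1
  · -- then v a * u b = 0 always, contradiction
    obtain ⟨a, ha⟩ := Function.ne_iff.mp hv0
    obtain ⟨b, hb⟩ := Function.ne_iff.mp hu0
    have := hentry a b
    rw [hc, one_mul] at this
    have hz : 2 * (sR : ℂ)⁻¹ * (v a * u b) = 0 := by linear_combination -this
    have h2 : (2 : ℂ) * (sR : ℂ)⁻¹ ≠ 0 := by
      apply mul_ne_zero two_ne_zero
      exact inv_ne_zero hsR0
    rcases mul_eq_zero.mp hz with h | h
    · exact h2 h
    · rcases mul_eq_zero.mp h with h | h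
      · exact ha h
      · exact hb h
  · -- then M is a product, contradicting GME
    apply hGME J hJne hJuniv
    refine ⟨fun a => (2 * (sR : ℂ)⁻¹ / (1 - c)) * v a, u, fun x z => ?_⟩
    have h1c : (1 : ℂ) - c ≠ 0 := fun h => hc (by linear_combination -h)
    have h2 : (1 - c) * M x z = 2 * (sR : ℂ)⁻¹ * (v x * u z) := by
      linear_combination hentry x z
    have hM : ψ (joinFun J x z) = M x z := rfl
    rw [hM, show (2 * (sR : ℂ)⁻¹ / (1 - c) * v x) * u z
        = ((1 - c) * M x z) / (1 - c) from by rw [h2]; ring,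
      mul_div_cancel_left₀ _ h1c]
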